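/- Fix ψ ∈ (0, π) and let g : ℝ → [0,∞) be continuous, even, 2π-periodic, and non-increasing on (0, π). Then the function k(φ) = ∫_{φ−ψ}^{φ+ψ} g(θ) dθ is non-increasing on (0, π). -/
import Mathlib


open Real

private lemma antitone_icc (g : ℝ → ℝ) (hgc : Continuous g)
    (hgm : AntitoneOn g (Set.Ioo 0 π)) : AntitoneOn g (Set.Icc 0 π) := by
  intro s hs t ht hst
  rcases eq_or_lt_of_le hst with rfl | hlt
  · exact le_rfl
  · have ht1 : Filter.Tendsto (fun ε : ℝ => g (t - ε)) (nhdsWithin 0 (Set.Ioi 0)) (nhds (g t)) := by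
      have h2 : Filter.Tendsto (fun ε : ℝ => t - ε) (nhds 0) (nhds t) := by
        exact (continuous_const.sub continuous_id).tendsto' 0 t (by simp)
      exact ((hgc.tendsto t).comp h2).mono_left nhdsWithin_le_nhds
    have ht2 : Filter.Tendsto (fun ε : ℝ => g (s + ε)) (nhdsWithin 0 (Set.Ioi 0)) (nhds (g s)) := by
      have h2 : Filter.Tendsto (fun ε : ℝ => s + ε) (nhds 0) (nhds s) := by
        exact (continuous_const.add continuous_id).tendsto' 0 s (by simp)
      exact ((hgc.tendsto s).comp h2).mono_left nhdsWithin_le_nhds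
    have hev : ∀ᶠ ε : ℝ in nhdsWithin 0 (Set.Ioi 0), g (t - ε) ≤ g (s + ε) := by
      filter_upwards [Ioo_mem_nhdsGT_of_mem (⟨le_rfl, by linarith⟩ :
        (0 : ℝ) ∈ Set.Ico 0 ((t - s) / 2))] with ε hε
      obtain ⟨hε0, hε1⟩ := hε
      have hs0 : 0 ≤ s := hs.1
      have htπ : t ≤ π := ht.2
      apply hgm
      · exact ⟨by linarith, by linarith⟩
      · exact ⟨by linarith, by linarith⟩
      · linarith
    exact le_of_tendsto_of_tendsto ht1 ht2 hev

private lemma key_pt (ψ : ℝ) (hψ : ψ ∈ Set.Ioo 0 π) (g : ℝ → ℝ) (hgc : Continuous g)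
    (hge : ∀ x, g (-x) = g x) (hgp : Function.Periodic g (2 * π))
    (hgm : AntitoneOn g (Set.Ioo 0 π))
    (θ : ℝ) (h1 : 0 < θ + ψ) (h2 : θ + ψ < π) : g (θ + 2 * ψ) ≤ g θ := by
  have hA := antitone_icc g hgc hgm
  have hπ := Real.pi_pos
  obtain ⟨hψ0, hψπ⟩ := hψ
  have hgeven : g θ = g |θ| := by
    rcases abs_cases θ with ⟨h, _⟩ | ⟨h, _⟩
    · rw [h]
    · rw [h, hge]
  rw [hgeven]
  have habs : |θ| ∈ Set.Icc 0 π := ⟨abs_nonneg θ, by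
    rcases abs_cases θ with ⟨h, _⟩ | ⟨h, _⟩ <;> rw [h] <;> linarith⟩
  by_cases hb : θ + 2 * ψ ≤ π
  · exact hA habs ⟨by linarith, hb⟩ (by rcases abs_cases θ with ⟨h, _⟩ | ⟨h, _⟩ <;>
      rw [h] <;> linarith)
  · push_neg at hb
    have : g (θ + 2 * ψ) = g (2 * π - (θ + 2 * ψ)) := by
      rw [← hge (2 * π - (θ + 2 * ψ))]
      have := hgp (-(2 * π - (θ + 2 * ψ)))
      rw [← this]; ring_nf
    rw [this]
    have habs2 : |θ| ≤ 2 * π - (θ + 2 * ψ) := by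
      rcases abs_cases θ with ⟨h, _⟩ | ⟨h, _⟩ <;> rw [h] <;> linarith
    exact hA habs ⟨by linarith, by linarith [abs_nonneg θ]⟩ habs2

theorem stmt_10 (ψ : ℝ) (hψ : ψ ∈ Set.Ioo 0 π) (g : ℝ → ℝ)
    (hgc : Continuous g) (hg0 : ∀ x, 0 ≤ g x)
    (hge : ∀ x, g (-x) = g x) (hgp : Function.Periodic g (2 * π))
    (hgm : AntitoneOn g (Set.Ioo 0 π)) :
    AntitoneOn (fun φ => ∫ θ in (φ - ψ)..(φ + ψ), g θ) (Set.Ioo 0 π) := by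
  intro x hx y hy hxy
  obtain ⟨hψ0, hψπ⟩ := hψ
  simp only
  have hint : ∀ a b : ℝ, IntervalIntegrable g MeasureTheory.volume a b :=
    fun a b => hgc.intervalIntegrable a b
  have split1 : ∫ θ in (x - ψ)..(y + ψ), g θ =
      (∫ θ in (x - ψ)..(x + ψ), g θ) + ∫ θ in (x + ψ)..(y + ψ), g θ :=
    (intervalIntegral.integral_add_adjacent_intervals (hint _ _) (hint _ _)).symm
  have split2 : ∫ θ in (x - ψ)..(y + ψ), g θ =
      (∫ θ in (x - ψ)..(y - ψ), g θ) + ∫ θ in (y - ψ)..(y + ψ), g θ :=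
    (intervalIntegral.integral_add_adjacent_intervals (hint _ _) (hint _ _)).symm
  have key : ∫ θ in (x + ψ)..(y + ψ), g θ ≤ ∫ θ in (x - ψ)..(y - ψ), g θ := by
    have hshift : ∫ θ in (x + ψ)..(y + ψ), g θ =
        ∫ θ in (x - ψ)..(y - ψ), g (θ + 2 * ψ) := by
      rw [intervalIntegral.integral_comp_add_right g (2 * ψ)]
      ring_nf
    rw [hshift]
    apply intervalIntegral.integral_mono_on (by linarith)
      ((hgc.comp (continuous_id.add continuous_const)).intervalIntegrable _ _) (hint _ _)
    intro θ hθ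
    obtain ⟨hθ1, hθ2⟩ := hθ
    exact key_pt ψ ⟨hψ0, hψπ⟩ g hgc hge hgp hgm θ (by linarith [hx.1]) (by linarith [hy.2])
  linarith [split1.symm.trans split2]
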